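/- Let X, L, Y be nonempty finite types and let p be a probability mass function on X × L × Y × Y, with coordinates written (x, l, y, s) where the last coordinate is the sampling intention S taking values in the same type as the label Y. Assume: (i) the label is independent of L, i.e. P(Y=y | L=l) = P(Y=y) for all y and all l with P(L=l) > 0; and (ii) the sampling intention depends only on L, i.e. P(S=s | X=x, L=l, Y=y) = P(S=s | L=l) for all x, l, y, s with P(X=x, L=l, Y=y) > 0. Write {S=Y} for the event that the last two coordinates are equal. Then for all l, y with P(L=l, S=Y) > 0 and P(L=l) > 0: P(Y=y | L=l, S=Y) = P(S=y | L=l) · P(Y=y) · P(L=l) / P(L=l, S=Y). -/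

import Mathlib

/-- second identity of the leakage-neutral decomposition: pmf on
`X × L × Y × Y` with coordinates `(x, l, y, s)`. If (i) `P(Y=y | L=l) = P(Y=y)`
whenever `P(L=l) > 0` and (ii) `P(S=s | X=x, L=l, Y=y) = P(S=s | L=l)` whenever
`P(X=x, L=l, Y=y) > 0`, then
`P(Y=y | L=l, S=Y) = P(S=y | L=l) · P(Y=y) · P(L=l) / P(L=l, S=Y)`
under the stated positivity conditions. -/
theorem stmt_16 {X L Y : Type*} [Fintype X] [Fintype L] [Fintype Y]
    [Nonempty X] [Nonempty L] [Nonempty Y]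
    (p : X × L × Y × Y → ℝ) (hp : ∀ z, 0 ≤ p z)
    (hsum : ∑ z : X × L × Y × Y, p z = 1)
    -- (i) the label is independent of L: P(Y=y | L=l) = P(Y=y)
    (hYL : ∀ (y : Y) (l : L),
      0 < (∑ x' : X, ∑ y' : Y, ∑ s' : Y, p (x', l, y', s')) →
      (∑ x' : X, ∑ s' : Y, p (x', l, y, s')) /
          (∑ x' : X, ∑ y' : Y, ∑ s' : Y, p (x', l, y', s')) =
        ∑ x' : X, ∑ l' : L, ∑ s' : Y, p (x', l', y, s'))
    -- (ii) the sampling intention depends only on L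
    (hS : ∀ (x : X) (l : L) (y : Y) (s : Y),
      0 < (∑ s' : Y, p (x, l, y, s')) →
      p (x, l, y, s) / (∑ s' : Y, p (x, l, y, s')) =
        (∑ x' : X, ∑ y' : Y, p (x', l, y', s)) /
          (∑ x' : X, ∑ y' : Y, ∑ s' : Y, p (x', l, y', s'))) :
    ∀ (l : L) (y : Y),
      0 < (∑ x' : X, ∑ y' : Y, p (x', l, y', y')) →         -- P(L=l, S=Y) > 0
      0 < (∑ x' : X, ∑ y' : Y, ∑ s' : Y, p (x', l, y', s')) →   -- P(L=l) > 0
      (∑ x' : X, p (x', l, y, y)) / (∑ x' : X, ∑ y' : Y, p (x', l, y', y')) =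
        ((∑ x' : X, ∑ y' : Y, p (x', l, y', y)) /
            (∑ x' : X, ∑ y' : Y, ∑ s' : Y, p (x', l, y', s'))) *
          (∑ x' : X, ∑ l' : L, ∑ s' : Y, p (x', l', y, s')) *
          (∑ x' : X, ∑ y' : Y, ∑ s' : Y, p (x', l, y', s')) /
          (∑ x' : X, ∑ y' : Y, p (x', l, y', y')) := by
  intro l y hB hA
  set A := ∑ x' : X, ∑ y' : Y, ∑ s' : Y, p (x', l, y', s') with hAdef
  set q := (∑ x' : X, ∑ y' : Y, p (x', l, y', y)) / A with hqdef
  -- pointwise: p (x,l,y,y) = (∑ s', p (x,l,y,s')) * q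
  have key : ∀ x : X, p (x, l, y, y) = (∑ s' : Y, p (x, l, y, s')) * q := by
    intro x
    rcases lt_or_eq_of_le (Finset.sum_nonneg fun s _ => hp (x, l, y, s)) with hpos | hzero
    · have h := (div_eq_iff hpos.ne').mp (hS x l y y hpos)
      rw [h, hqdef, mul_comm]
    · have hz : ∀ s : Y, p (x, l, y, s) = 0 := by
        intro s
        have := (Finset.sum_eq_zero_iff_of_nonneg (fun s _ => hp (x, l, y, s))).mp hzero.symm
        exact this s (Finset.mem_univ s)
      simp [hz]
  have step2 : (∑ x' : X, p (x', l, y, y)) = (∑ x' : X, ∑ s' : Y, p (x', l, y, s')) * q := by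
    rw [Finset.sum_mul]
    exact Finset.sum_congr rfl fun x _ => key x
  have step3 : (∑ x' : X, ∑ s' : Y, p (x', l, y, s')) =
      (∑ x' : X, ∑ l' : L, ∑ s' : Y, p (x', l', y, s')) * A := by
    exact (div_eq_iff hA.ne').mp (hYL y l hA)
  rw [step2, step3, hqdef]
  field_simp
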